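/- Let S and T be probability distributions on X × Y with marginals S_X, T_X, let F be a class of score functions, and fix ρ > 0, ε > 0, p ≥ 1 (all relevant integrands measurable and integrable). Suppose f* ∈ F minimizes f ↦ R^{(ρ)}_T(f) + R^{(ρ)}_S(f) over F, and set λ = R^{(ρ)}_T(f*) + R^{(ρ)}_S(f*). Then for every f ∈ F: R^{rob}_T(f) ≤ R^{(ρ)}_S(f) + d^{rob,(ρ)}_{f,F}(S_X, T_X) + λ. -/
import Mathlib


noncomputable section
open MeasureTheory Finset Set

namespace RobustUDA

/-- The input space: `ℝ^d`. -/
abbrev Inp (d : ℕ) := Fin d → ℝ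

variable {d C : ℕ}

/-- `ℓ_p`-norm of a vector in `ℝ^d`. -/
def pnorm (p : ℝ) (v : Inp d) : ℝ := (∑ i, |v i| ^ p) ^ (1 / p)

/-- The `ε`-ball centered at `x` in the `ℓ_p`-norm. -/
def ball (p ε : ℝ) (x : Inp d) : Set (Inp d) := {x' | pnorm p (fun i => x i - x' i) ≤ ε}

open Classical in
/-- Indicator function of a proposition, real valued. -/
def ind (P : Prop) : ℝ := if P then 1 else 0

/-- The ramp function `Φ_ρ`. -/
def ramp (ρ t : ℝ) : ℝ := if t ≤ 0 then 1 else if t ≤ ρ then 1 - t / ρ else 0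

/-- The margin `M_f(x,y) = f_y(x) - max_{y' ≠ y} f_{y'}(x)`. -/
def margin (f : Inp d → Fin C → ℝ) (x : Inp d) (y : Fin C) : ℝ :=
  f x y - sSup (f x '' {y' | y' ≠ y})

/-- Standard (0-1) risk of a classifier `hf` on a distribution `D` on `X × Y`. -/
def stdRisk (D : Measure (Inp d × Fin C)) (hf : Inp d → Fin C) : ℝ :=
  ∫ z, ind (z.2 ≠ hf z.1) ∂D

/-- Robust (0-1) risk of a classifier `hf`. -/
def robustRisk (p ε : ℝ) (D : Measure (Inp d × Fin C)) (hf : Inp d → Fin C) : ℝ :=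
  ∫ z, sSup ((fun x' => ind (z.2 ≠ hf x')) '' ball p ε z.1) ∂D

/-- Margin risk `R^{(ρ)}_D(f)`. -/
def marginRisk (ρ : ℝ) (D : Measure (Inp d × Fin C)) (f : Inp d → Fin C → ℝ) : ℝ :=
  ∫ z, ramp ρ (margin f z.1 z.2) ∂D

/-- Robust margin risk `R^{rob,(ρ)}_D(f)`. -/
def robustMarginRisk (p ε ρ : ℝ) (D : Measure (Inp d × Fin C)) (f : Inp d → Fin C → ℝ) : ℝ :=
  ∫ z, sSup ((fun x' => ramp ρ (margin f x' z.2)) '' ball p ε z.1) ∂D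

/-- Margin disparity `disp^{(ρ)}_{D_X}(f', f)`, where `hf'` is the classifier induced by `f'`. -/
def marginDisp (ρ : ℝ) (DX : Measure (Inp d)) (hf' : Inp d → Fin C)
    (f : Inp d → Fin C → ℝ) : ℝ :=
  ∫ x, ramp ρ (margin f x (hf' x)) ∂DX

/-- 0-1 robust disparity `disp^{rob}_{D_X}(f', f)`. -/
def robDisp (p ε : ℝ) (DX : Measure (Inp d)) (hf' hf : Inp d → Fin C) : ℝ :=
  ∫ x, sSup ((fun x' => ind (hf' x ≠ hf x')) '' ball p ε x) ∂DX

/-- Robust margin disparity `disp^{rob,(ρ)}_{D_X}(f', f)`. -/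
def robMarginDisp (p ε ρ : ℝ) (DX : Measure (Inp d)) (hf' : Inp d → Fin C)
    (f : Inp d → Fin C → ℝ) : ℝ :=
  ∫ x, sSup ((fun x' => ramp ρ (margin f x' (hf' x))) '' ball p ε x) ∂DX

/-- Point-wise local Lipschitz constant `L_f(x, ε)` (w.r.t. the `ℓ_p` ball and `ℓ₁` output norm). -/
def locLip (p ε : ℝ) (f : Inp d → Fin C → ℝ) (x : Inp d) : ℝ :=
  sSup ((fun x' => (∑ c, |f x' c - f x c|) / pnorm p (fun i => x' i - x i)) ''
    {x' | x' ∈ ball p ε x ∧ x' ≠ x})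

/-- Topological support of a measure on the input space. -/
def msupport (μ : Measure (Inp d)) : Set (Inp d) :=
  {x | ∀ U : Set (Inp d), IsOpen U → x ∈ U → 0 < μ U}

/-- Local Lipschitz constant `L_f(D_X, ε)` over the support of `D_X`. -/
def locLipOn (p ε : ℝ) (f : Inp d → Fin C → ℝ) (μ : Measure (Inp d)) : ℝ :=
  sSup (locLip p ε f '' msupport μ)

/-- Robust margin disparity discrepancy `d^{rob,(ρ)}_{f,F}(S_X, T_X)` where `cl` assigns
to each score function its induced classifier. -/
def discrepancy (p ε ρ : ℝ) (F : Set (Inp d → Fin C → ℝ))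
    (cl : (Inp d → Fin C → ℝ) → Inp d → Fin C)
    (SX TX : Measure (Inp d)) (f : Inp d → Fin C → ℝ) : ℝ :=
  sSup ((fun f' => robMarginDisp p ε ρ TX (cl f') f - marginDisp ρ SX (cl f') f) '' F)

/-- The class `Π₁F` of component functions of score functions in `F`. -/
def Pi1 (F : Set (Inp d → Fin C → ℝ)) : Set (Inp d → ℝ) :=
  {g | ∃ f ∈ F, ∃ y : Fin C, g = fun x => f x y}

/-- The class `Π_H F` where `H = {h_f : f ∈ F}` is given by the classifier assignment `cl`. -/
def PiH (F : Set (Inp d → Fin C → ℝ)) (cl : (Inp d → Fin C → ℝ) → Inp d → Fin C) :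
    Set (Inp d → ℝ) :=
  {g | ∃ f ∈ F, ∃ f' ∈ F, g = fun x => f x (cl f' x)}

/-- Rademacher complexity `ℜ_{n,D}(G)` of a class `G` of real functions on `Z`. -/
def rademacher (n : ℕ) {Z : Type*} [MeasurableSpace Z] (D : Measure Z) (G : Set (Z → ℝ)) : ℝ :=
  ∫ z : Fin n → Z, ∫ σ : Fin n → Bool,
      sSup ((fun g => (n : ℝ)⁻¹ * ∑ i, (if σ i then (1 : ℝ) else -1) * g (z i)) '' G)
    ∂(Measure.pi fun _ => (PMF.uniformOfFintype Bool).toMeasure) ∂(Measure.pi fun _ => D)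


section Helpers

lemma ramp_nonneg {ρ t : ℝ} (hρ : 0 < ρ) : 0 ≤ ramp ρ t := by
  unfold ramp
  split_ifs with h1 h2
  · norm_num
  · have : t / ρ ≤ 1 := (div_le_one hρ).mpr h2
    linarith
  · exact le_refl 0

lemma ramp_le_one {ρ t : ℝ} (hρ : 0 < ρ) : ramp ρ t ≤ 1 := by
  unfold ramp
  split_ifs with h1 h2
  · exact le_refl 1
  · have : 0 ≤ t / ρ := div_nonneg (le_of_lt (lt_of_not_ge h1)) hρ.le
    linarith
  · norm_num

lemma ramp_eq_one {ρ t : ℝ} (ht : t ≤ 0) : ramp ρ t = 1 := if_pos ht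

/-- If some `y₀ ≠ y` has score at least that of `y`, the margin at `y` is nonpositive. -/
lemma margin_nonpos {g : Inp d → Fin C → ℝ} {x : Inp d} {y y₀ : Fin C}
    (hne : y₀ ≠ y) (hle : g x y ≤ g x y₀) : margin g x y ≤ 0 := by
  have hmem : g x y₀ ∈ g x '' {y' | y' ≠ y} := ⟨y₀, hne, rfl⟩
  have hbdd : BddAbove (g x '' {y' | y' ≠ y}) := (Set.toFinite _).bddAbove
  have : g x y₀ ≤ sSup (g x '' {y' | y' ≠ y}) := le_csSup hbdd hmem
  unfold margin
  linarith

lemma mem_ball_self {x : Inp d} {p ε : ℝ} (hp : 1 ≤ p) (hε : 0 < ε) :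
    x ∈ ball p ε x := by
  have hp0 : p ≠ 0 := by positivity
  have : pnorm p (fun i => x i - x i) = 0 := by
    simp [pnorm, sub_self, abs_zero, Real.zero_rpow hp0]
    rw [Real.zero_rpow (by positivity)]
  simp only [ball, Set.mem_setOf_eq, this]
  exact hε.le

/-- Key pointwise inequality A. -/
lemma ind_le_ramp_add_ramp {ρ : ℝ} (hρ : 0 < ρ)
    (f fs : Inp d → Fin C → ℝ) (cl : (Inp d → Fin C → ℝ) → Inp d → Fin C)
    (hcl : ∀ (g : Inp d → Fin C → ℝ) (x : Inp d) (y : Fin C), g x y ≤ g x (cl g x))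
    (x0 x' : Inp d) (y : Fin C) :
    ind (y ≠ cl f x') ≤ ramp ρ (margin fs x0 y) + ramp ρ (margin f x' (cl fs x0)) := by
  have r1 := ramp_nonneg (ρ := ρ) (t := margin fs x0 y) hρ
  have r2 := ramp_nonneg (ρ := ρ) (t := margin f x' (cl fs x0)) hρ
  by_cases h : y = cl f x'
  · rw [ind, if_neg (by simp [h])]
    linarith
  · rw [ind, if_pos h]
    by_cases h2 : cl fs x0 = y
    · have hm : margin f x' (cl fs x0) ≤ 0 := by
        rw [h2]
        exact margin_nonpos (fun he => h he.symm) (hcl f x' y)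
      rw [ramp_eq_one hm]
      linarith
    · have hm : margin fs x0 y ≤ 0 := margin_nonpos h2 (hcl fs x0 y)
      rw [ramp_eq_one hm]
      linarith

/-- Key pointwise inequality B. -/
lemma ramp_cl_le {ρ : ℝ} (hρ : 0 < ρ)
    (f fs : Inp d → Fin C → ℝ) (cl : (Inp d → Fin C → ℝ) → Inp d → Fin C)
    (hcl : ∀ (g : Inp d → Fin C → ℝ) (x : Inp d) (y : Fin C), g x y ≤ g x (cl g x))
    (x : Inp d) (y : Fin C) :
    ramp ρ (margin f x (cl fs x)) ≤ ramp ρ (margin f x y) + ramp ρ (margin fs x y) := by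
  by_cases h : cl fs x = y
  · rw [h]
    have := ramp_nonneg (ρ := ρ) (t := margin fs x y) hρ
    linarith
  · have hm : margin fs x y ≤ 0 := margin_nonpos h (hcl fs x y)
    rw [ramp_eq_one hm]
    have := ramp_le_one (ρ := ρ) (t := margin f x (cl fs x)) hρ
    have := ramp_nonneg (ρ := ρ) (t := margin f x y) hρ
    linarith

end Helpers

/-- **Eq. (12).** If `f* ∈ F` minimizes `f ↦ R^{(ρ)}_T(f) + R^{(ρ)}_S(f)` over `F`
and `λ = R^{(ρ)}_T(f*) + R^{(ρ)}_S(f*)`, then for every `f ∈ F`: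
`R^{rob}_T(f) ≤ R^{(ρ)}_S(f) + d^{rob,(ρ)}_{f,F}(S_X, T_X) + λ`. -/
theorem robustRisk_le_marginRisk_add_discrepancy {d C : ℕ} (hC : 2 ≤ C)
    (ρ ε p : ℝ) (hρ : 0 < ρ) (hε : 0 < ε) (hp : 1 ≤ p)
    (S T : Measure (Inp d × Fin C)) [IsProbabilityMeasure S] [IsProbabilityMeasure T]
    (F : Set (Inp d → Fin C → ℝ))
    (cl : (Inp d → Fin C → ℝ) → Inp d → Fin C)
    (hcl : ∀ (g : Inp d → Fin C → ℝ) (x : Inp d) (y : Fin C), g x y ≤ g x (cl g x))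
    (fs : Inp d → Fin C → ℝ) (hfsF : fs ∈ F)
    (hmin : ∀ g ∈ F, marginRisk ρ T fs + marginRisk ρ S fs ≤ marginRisk ρ T g + marginRisk ρ S g)
    (hint1 : ∀ f ∈ F,
      Integrable (fun z => sSup ((fun x' => ind (z.2 ≠ cl f x')) '' ball p ε z.1)) T)
    (hint2 : ∀ f ∈ F, Integrable (fun z => ramp ρ (margin f z.1 z.2)) S)
    (hint3 : ∀ f ∈ F, Integrable (fun z => ramp ρ (margin f z.1 z.2)) T)
    (hint4 : ∀ f ∈ F, ∀ f' ∈ F, Integrable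
      (fun x => sSup ((fun x' => ramp ρ (margin f x' (cl f' x))) '' ball p ε x))
      (T.map Prod.fst))
    (hint5 : ∀ f ∈ F, ∀ f' ∈ F,
      Integrable (fun x => ramp ρ (margin f x (cl f' x))) (S.map Prod.fst)) :
    ∀ f ∈ F, robustRisk p ε T (cl f) ≤
      marginRisk ρ S f + discrepancy p ε ρ F cl (S.map Prod.fst) (T.map Prod.fst) f +
        (marginRisk ρ T fs + marginRisk ρ S fs) := by
  intro f hfF
  haveI hTX : IsProbabilityMeasure (T.map Prod.fst) :=
    Measure.isProbabilityMeasure_map measurable_fst.aemeasurable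
  -- abbreviations
  set Ψ : Inp d → ℝ :=
    fun x => sSup ((fun x' => ramp ρ (margin f x' (cl fs x))) '' ball p ε x) with hΨ
  have hballne : ∀ x : Inp d, (ball p ε x).Nonempty :=
    fun x => ⟨x, mem_ball_self hp hε⟩
  -- integrability of Ψ ∘ fst w.r.t. T
  have hΨT : Integrable (fun z : Inp d × Fin C => Ψ z.1) T :=
    (integrable_map_measure (hint4 f hfF fs hfsF).aestronglyMeasurable
      measurable_fst.aemeasurable).mp (hint4 f hfF fs hfsF)
  -- Step 1: robustRisk ≤ marginRisk ρ T fs + ∫ Ψ ∘ fst ∂T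
  have h1 : robustRisk p ε T (cl f) ≤
      marginRisk ρ T fs + ∫ z, Ψ z.1 ∂T := by
    have hmono : ∀ z : Inp d × Fin C,
        sSup ((fun x' => ind (z.2 ≠ cl f x')) '' ball p ε z.1) ≤
          ramp ρ (margin fs z.1 z.2) + Ψ z.1 := by
      intro z
      refine csSup_le ((hballne z.1).image _) ?_
      rintro r ⟨x', hx', rfl⟩
      have hA := ind_le_ramp_add_ramp hρ f fs cl hcl z.1 x' z.2
      have hB : ramp ρ (margin f x' (cl fs z.1)) ≤ Ψ z.1 := by
        refine le_csSup ?_ ⟨x', hx', rfl⟩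
        exact ⟨1, by rintro r ⟨x'', _, rfl⟩; exact ramp_le_one hρ⟩
      linarith
    calc robustRisk p ε T (cl f)
        ≤ ∫ z, (ramp ρ (margin fs z.1 z.2) + Ψ z.1) ∂T :=
          integral_mono (hint1 f hfF) ((hint3 fs hfsF).add hΨT) hmono
      _ = marginRisk ρ T fs + ∫ z, Ψ z.1 ∂T :=
          integral_add (hint3 fs hfsF) hΨT
  -- Step 2: ∫ Ψ ∘ fst ∂T = robMarginDisp
  have h2 : ∫ z, Ψ z.1 ∂T = robMarginDisp p ε ρ (T.map Prod.fst) (cl fs) f :=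
    (integral_map measurable_fst.aemeasurable
      (hint4 f hfF fs hfsF).aestronglyMeasurable).symm
  -- Step 3: robMarginDisp - marginDisp ≤ discrepancy
  have h3 : robMarginDisp p ε ρ (T.map Prod.fst) (cl fs) f -
      marginDisp ρ (S.map Prod.fst) (cl fs) f ≤
      discrepancy p ε ρ F cl (S.map Prod.fst) (T.map Prod.fst) f := by
    refine le_csSup ?_ ⟨fs, hfsF, rfl⟩
    refine ⟨1, ?_⟩
    rintro r ⟨f', hf', rfl⟩
    have hub : robMarginDisp p ε ρ (T.map Prod.fst) (cl f') f ≤ 1 := by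
      have : robMarginDisp p ε ρ (T.map Prod.fst) (cl f') f ≤
          ∫ _ : Inp d, (1 : ℝ) ∂(T.map Prod.fst) := by
        refine integral_mono (hint4 f hfF f' hf') (integrable_const 1) ?_
        intro x
        refine csSup_le ((hballne x).image _) ?_
        rintro r ⟨x'', _, rfl⟩
        exact ramp_le_one hρ
      simpa using this
    have hlb : 0 ≤ marginDisp ρ (S.map Prod.fst) (cl f') f :=
      integral_nonneg fun x => ramp_nonneg hρ
    simp only [Set.mem_setOf_eq]
    linarith
  -- Step 4: marginDisp as an integral over S
  have h4 : marginDisp ρ (S.map Prod.fst) (cl fs) f =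
      ∫ z, ramp ρ (margin f z.1 (cl fs z.1)) ∂S :=
    integral_map measurable_fst.aemeasurable
      (hint5 f hfF fs hfsF).aestronglyMeasurable
  -- Step 5: that integral is at most marginRisk S f + marginRisk S fs
  have h5 : ∫ z, ramp ρ (margin f z.1 (cl fs z.1)) ∂S ≤
      marginRisk ρ S f + marginRisk ρ S fs := by
    have hintS : Integrable (fun z : Inp d × Fin C => ramp ρ (margin f z.1 (cl fs z.1))) S :=
      (integrable_map_measure (hint5 f hfF fs hfsF).aestronglyMeasurable
        measurable_fst.aemeasurable).mp (hint5 f hfF fs hfsF)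
    calc ∫ z, ramp ρ (margin f z.1 (cl fs z.1)) ∂S
        ≤ ∫ z, (ramp ρ (margin f z.1 z.2) + ramp ρ (margin fs z.1 z.2)) ∂S := by
          refine integral_mono hintS ((hint2 f hfF).add (hint2 fs hfsF)) ?_
          intro z
          exact ramp_cl_le hρ f fs cl hcl z.1 z.2
      _ = marginRisk ρ S f + marginRisk ρ S fs :=
          integral_add (hint2 f hfF) (hint2 fs hfsF)
  linarith

end RobustUDA
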